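/- Let λ' be a delaying of λ satisfying a set of demands D (each demand (u,v,t) ∈ D requires a strictly increasing temporal path from u to v with arrival time at most t under λ'). Let T_max = max over (u,v,t) ∈ D of t. Define λ'' by λ''(e) = min(λ'(e), T_max) if λ(e) ≤ T_max and λ''(e) = λ(e) otherwise. Then λ'' is a delaying of λ that also satisfies every demand in D. -/
import Mathlib


open List

/-- A temporal path witnessing a demand `(u, v, t)`: a walk whose edge labels are
strictly increasing and all at most `t` (since labels strictly increase, the
arrival time, i.e. the last label, is at most `t`). -/
def SatisfiesDemand {V : Type*} (G : SimpleGraph V) (lab : Sym2 V → ℕ)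
    (u v : V) (t : ℕ) : Prop :=
  ∃ p : G.Walk u v, (p.edges.map lab).Chain' (· < ·) ∧ ∀ e ∈ p.edges, lab e ≤ t

/-- Capping a delaying at `T_max` (on edges whose original label is at most `T_max`)
yields a delaying that still satisfies every demand. -/
theorem cap_delaying_at_Tmax {V : Type*} (G : SimpleGraph V) (lab lab' : Sym2 V → ℕ)
    (D : Finset (V × V × ℕ)) (Tmax : ℕ) (hT : Tmax = D.sup (fun d => d.2.2))
    (hdelay : ∀ e, lab e ≤ lab' e)
    (hsat : ∀ d ∈ D, SatisfiesDemand G lab' d.1 d.2.1 d.2.2)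
    (lab'' : Sym2 V → ℕ)
    (hdef : ∀ e, lab'' e = if lab e ≤ Tmax then min (lab' e) Tmax else lab e) :
    (∀ e, lab e ≤ lab'' e) ∧ ∀ d ∈ D, SatisfiesDemand G lab'' d.1 d.2.1 d.2.2 := by
  constructor
  · intro e
    rw [hdef e]
    split_ifs with h
    · exact le_min (hdelay e) h
    · exact le_rfl
  · intro d hd
    obtain ⟨p, hchain, hle⟩ := hsat d hd
    have ht : d.2.2 ≤ Tmax := hT ▸ Finset.le_sup (f := fun d => d.2.2) hd
    have heq : ∀ e ∈ p.edges, lab'' e = lab' e := by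
      intro e he
      have h1 : lab' e ≤ Tmax := le_trans (hle e he) ht
      rw [hdef e, if_pos (le_trans (hdelay e) h1), min_eq_left h1]
    refine ⟨p, ?_, ?_⟩
    · rwa [List.map_congr_left heq]
    · intro e he; rw [heq e he]; exact hle e he
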